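/- With κ = min{i : i ≥ μ} and fⱼ as in the previous statement, for any subset A ⊆ ℤ and f_A = ∑_{j∈A} fⱼ, the bound |Δf_A(i)| ≤ (1−πᵢ)/(αᵢ∧βᵢ) ∧ (1/αᵢ) ∧ (1/βᵢ) ≤ (1−πᵢ)/σ² holds for every i ∈ ℤ. -/

import Mathlib

open Set

noncomputable section SteinAux

def steinAl (μ σ2 : ℝ) (κ : ℤ) (i : ℤ) : ℝ := if κ ≤ i then σ2 else σ2 + μ - (i : ℝ)

def steinBe (μ σ2 : ℝ) (κ : ℤ) (i : ℤ) : ℝ := if κ ≤ i then σ2 + (i : ℝ) - μ else σ2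

variable {μ σ2 : ℝ} {κ : ℤ}

lemma steinAl_ge (hκ2 : (κ : ℝ) < μ + 1) (i : ℤ) : σ2 ≤ steinAl μ σ2 κ i := by
  unfold steinAl; split_ifs with h
  · exact le_rfl
  · have h1 : (i : ℝ) + 1 ≤ (κ : ℝ) := by exact_mod_cast (by omega : i + 1 ≤ κ)
    linarith

lemma steinAl_anti (hκ2 : (κ : ℝ) < μ + 1) {i j : ℤ} (hij : i ≤ j) :
    steinAl μ σ2 κ j ≤ steinAl μ σ2 κ i := by
  unfold steinAl; split_ifs with h1 h2 h2
  · exact le_rfl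
  · have h3 : (i : ℝ) + 1 ≤ (κ : ℝ) := by exact_mod_cast (by omega : i + 1 ≤ κ)
    linarith
  · exact absurd (h2.trans hij) h1
  · have : (i : ℝ) ≤ (j : ℝ) := by exact_mod_cast hij
    linarith

lemma steinBe_ge (hκ1 : μ ≤ (κ : ℝ)) (i : ℤ) : σ2 ≤ steinBe μ σ2 κ i := by
  unfold steinBe; split_ifs with h
  · have : (κ : ℝ) ≤ (i : ℝ) := by exact_mod_cast h
    linarith
  · exact le_rfl

lemma steinBe_mono (hκ1 : μ ≤ (κ : ℝ)) {i j : ℤ} (hij : i ≤ j) :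
    steinBe μ σ2 κ i ≤ steinBe μ σ2 κ j := by
  unfold steinBe; split_ifs with h1 h2 h2
  · have : (i : ℝ) ≤ (j : ℝ) := by exact_mod_cast hij
    linarith
  · exact absurd (h1.trans hij) h2
  · have : (κ : ℝ) ≤ (j : ℝ) := by exact_mod_cast h2
    linarith
  · exact le_rfl

end SteinAux

noncomputable section SteinFG

def steinF (π : ℤ → ℝ) (k : ℤ) : ℝ := ∑' l, (Set.Iic k).indicator π l
def steinG (π : ℤ → ℝ) (k : ℤ) : ℝ := ∑' l, (Set.Ici k).indicator π l

variable {π : ℤ → ℝ} (hpos : ∀ i, 0 < π i) (hsum : HasSum π 1)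

lemma hπs (hsum : HasSum π 1) : Summable π := hsum.summable

lemma steinF_summable (hsum : HasSum π 1) (k : ℤ) : Summable ((Set.Iic k).indicator π) :=
  hsum.summable.indicator _

lemma steinG_summable (hsum : HasSum π 1) (k : ℤ) : Summable ((Set.Ici k).indicator π) :=
  hsum.summable.indicator _

lemma steinF_nonneg (hpos : ∀ i, 0 < π i) (k : ℤ) : 0 ≤ steinF π k :=
  tsum_nonneg fun l => Set.indicator_nonneg (fun j _ => (hpos j).le) l

lemma steinG_nonneg (hpos : ∀ i, 0 < π i) (k : ℤ) : 0 ≤ steinG π k :=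
  tsum_nonneg fun l => Set.indicator_nonneg (fun j _ => (hpos j).le) l

lemma steinF_sub (k : ℤ) : (∑' l : {l : ℤ // l ≤ k}, π ↑l) = steinF π k :=
  tsum_subtype (Set.Iic k) π

lemma steinG_sub (k : ℤ) : (∑' l : {l : ℤ // k ≤ l}, π ↑l) = steinG π k :=
  tsum_subtype (Set.Ici k) π

lemma steinFG (hsum : HasSum π 1) (k : ℤ) : steinF π (k - 1) + steinG π k = 1 := by
  have hsplit : ∀ l, (Set.Iic (k-1)).indicator π l + (Set.Ici k).indicator π l = π l := by
    intro l
    by_cases h : l ≤ k - 1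
    · have h2 : ¬ k ≤ l := by omega
      simp [Set.indicator_apply, h, h2]
    · have h2 : k ≤ l := by omega
      simp [Set.indicator_apply, h, h2]
  have := Summable.tsum_add (steinF_summable hsum (k-1)) (steinG_summable hsum k)
  rw [tsum_congr hsplit, hsum.tsum_eq] at this
  exact this.symm

lemma steinSingle (k : ℤ) : (∑' l, ({k} : Set ℤ).indicator π l) = π k := by
  rw [tsum_eq_single k (fun l hl => by simp [Set.indicator_apply, hl])]
  simp

lemma steinF_step (hsum : HasSum π 1) (k : ℤ) : steinF π k = steinF π (k - 1) + π k := by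
  have hsplit : ∀ l, (Set.Iic k).indicator π l
      = (Set.Iic (k-1)).indicator π l + ({k} : Set ℤ).indicator π l := by
    intro l
    rcases lt_trichotomy l k with h|h|h
    · have h1 : l ≤ k := h.le
      have h2 : l ≤ k - 1 := by omega
      have h3 : l ≠ k := by omega
      simp [Set.indicator_apply, h1, h2, h3]
    · subst h
      have h2 : ¬ l ≤ l - 1 := by omega
      simp [Set.indicator_apply, h2]
    · have h1 : ¬ l ≤ k := by omega
      have h2 : ¬ l ≤ k - 1 := by omega
      have h3 : l ≠ k := by omega
      simp [Set.indicator_apply, h1, h2, h3]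
  rw [steinF, tsum_congr hsplit,
    Summable.tsum_add (steinF_summable hsum (k-1)) (hsum.summable.indicator _), steinSingle]
  rfl

lemma steinG_step (hsum : HasSum π 1) (k : ℤ) : steinG π k = steinG π (k + 1) + π k := by
  have hsplit : ∀ l, (Set.Ici k).indicator π l
      = (Set.Ici (k+1)).indicator π l + ({k} : Set ℤ).indicator π l := by
    intro l
    rcases lt_trichotomy l k with h|h|h
    · have h1 : ¬ k ≤ l := by omega
      have h2 : ¬ k + 1 ≤ l := by omega
      have h3 : l ≠ k := by omega
      simp [Set.indicator_apply, h1, h2, h3]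
    · subst h
      have h2 : ¬ l + 1 ≤ l := by omega
      simp [Set.indicator_apply, h2]
    · have h1 : k ≤ l := h.le
      have h2 : k + 1 ≤ l := by omega
      have h3 : l ≠ k := by omega
      simp [Set.indicator_apply, h1, h2, h3]
  rw [steinG, tsum_congr hsplit,
    Summable.tsum_add (steinG_summable hsum (k+1)) (hsum.summable.indicator _), steinSingle]
  rfl

lemma steinF_pos (hpos : ∀ i, 0 < π i) (hsum : HasSum π 1) (k : ℤ) : 0 < steinF π k := by
  have h1 : (Set.Iic k).indicator π k ≤ steinF π k :=
    Summable.le_tsum (steinF_summable hsum k) k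
      (fun j _ => Set.indicator_nonneg (fun j _ => (hpos j).le) j)
  have h2 : (Set.Iic k).indicator π k = π k := by simp [Set.indicator_apply]
  rw [h2] at h1
  exact lt_of_lt_of_le (hpos k) h1

lemma steinG_pos (hpos : ∀ i, 0 < π i) (hsum : HasSum π 1) (k : ℤ) : 0 < steinG π k := by
  have h1 : (Set.Ici k).indicator π k ≤ steinG π k :=
    Summable.le_tsum (steinG_summable hsum k) k
      (fun j _ => Set.indicator_nonneg (fun j _ => (hpos j).le) j)
  have h2 : (Set.Ici k).indicator π k = π k := by simp [Set.indicator_apply]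
  rw [h2] at h1
  exact lt_of_lt_of_le (hpos k) h1

end SteinFG

noncomputable section SteinClaims

variable {μ σ2 : ℝ} {κ : ℤ} {π : ℤ → ℝ}

lemma stein_shift_summable (hsum : HasSum π 1) : Summable (fun l : ℤ => π (l + 1)) :=
  ((Equiv.addRight (1:ℤ)).summable_iff (f := π)).mpr hsum.summable

lemma stein_shift_summable' (hsum : HasSum π 1) : Summable (fun l : ℤ => π (l - 1)) :=
  ((Equiv.subRight (1:ℤ)).summable_iff (f := π)).mpr hsum.summable

lemma stein_claim1 (hκ1 : μ ≤ (κ : ℝ)) (hκ2 : (κ : ℝ) < μ + 1)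
    (hpos : ∀ i, 0 < π i) (hsum : HasSum π 1)
    (hbal : ∀ i : ℤ, steinAl μ σ2 κ i * π i = steinBe μ σ2 κ (i+1) * π (i+1)) (k : ℤ) :
    steinAl μ σ2 κ k * steinF π (k - 1) ≤ steinBe μ σ2 κ k * steinF π k := by
  have step1 : steinAl μ σ2 κ k * steinF π (k - 1)
      = ∑' l, (Set.Iic (k-1)).indicator (fun l => steinAl μ σ2 κ k * π l) l := by
    rw [steinF, ← tsum_mul_left]
    congr 1
    funext l
    by_cases h : l ≤ k - 1 <;> simp [Set.indicator_apply, h]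
  have step2 : ∀ l, (Set.Iic (k-1)).indicator (fun l => steinAl μ σ2 κ k * π l) l
      ≤ (Set.Iic (k-1)).indicator (fun l => steinBe μ σ2 κ k * π (l + 1)) l := by
    intro l
    by_cases h : l ≤ k - 1
    · have hm : l ∈ Set.Iic (k-1) := h
      rw [Set.indicator_of_mem hm, Set.indicator_of_mem hm]
      calc steinAl μ σ2 κ k * π l
          ≤ steinAl μ σ2 κ l * π l :=
            mul_le_mul_of_nonneg_right (steinAl_anti hκ2 (by omega)) (hpos l).le
        _ = steinBe μ σ2 κ (l+1) * π (l+1) := hbal l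
        _ ≤ steinBe μ σ2 κ k * π (l+1) :=
            mul_le_mul_of_nonneg_right (steinBe_mono hκ1 (by omega)) (hpos _).le
    · have hm : l ∉ Set.Iic (k-1) := h
      rw [Set.indicator_of_notMem hm, Set.indicator_of_notMem hm]
  have sumL : Summable ((Set.Iic (k-1)).indicator (fun l => steinAl μ σ2 κ k * π l)) :=
    (hsum.summable.mul_left _).indicator _
  have sumR : Summable ((Set.Iic (k-1)).indicator (fun l => steinBe μ σ2 κ k * π (l + 1))) :=
    ((stein_shift_summable hsum).mul_left _).indicator _
  have step3 : ∑' l, (Set.Iic (k-1)).indicator (fun l => steinBe μ σ2 κ k * π (l + 1)) l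
      = steinBe μ σ2 κ k * steinF π k := by
    have hpt : ∀ l, (Set.Iic (k-1)).indicator (fun l => steinBe μ σ2 κ k * π (l + 1)) l
        = steinBe μ σ2 κ k * (Set.Iic k).indicator π (l + 1) := by
      intro l
      by_cases h : l ≤ k - 1
      · have h2 : l + 1 ≤ k := by omega
        simp [Set.indicator_apply, h, h2]
      · have h2 : ¬ (l + 1 ≤ k) := by omega
        simp [Set.indicator_apply, h, h2]
    rw [tsum_congr hpt, tsum_mul_left]
    congr 1
    exact (Equiv.addRight (1:ℤ)).tsum_eq ((Set.Iic k).indicator π)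
  calc steinAl μ σ2 κ k * steinF π (k - 1)
      = _ := step1
    _ ≤ _ := Summable.tsum_le_tsum step2 sumL sumR
    _ = steinBe μ σ2 κ k * steinF π k := step3

lemma stein_claim2 (hκ1 : μ ≤ (κ : ℝ)) (hκ2 : (κ : ℝ) < μ + 1)
    (hpos : ∀ i, 0 < π i) (hsum : HasSum π 1)
    (hbal : ∀ i : ℤ, steinAl μ σ2 κ i * π i = steinBe μ σ2 κ (i+1) * π (i+1)) (k : ℤ) :
    steinBe μ σ2 κ k * steinG π (k + 1) ≤ steinAl μ σ2 κ k * steinG π k := by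
  have step1 : steinBe μ σ2 κ k * steinG π (k + 1)
      = ∑' l, (Set.Ici (k+1)).indicator (fun l => steinBe μ σ2 κ k * π l) l := by
    rw [steinG, ← tsum_mul_left]
    congr 1
    funext l
    by_cases h : k + 1 ≤ l <;> simp [Set.indicator_apply, h]
  have step2 : ∀ l, (Set.Ici (k+1)).indicator (fun l => steinBe μ σ2 κ k * π l) l
      ≤ (Set.Ici (k+1)).indicator (fun l => steinAl μ σ2 κ k * π (l - 1)) l := by
    intro l
    by_cases h : k + 1 ≤ l
    · have hm : l ∈ Set.Ici (k+1) := h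
      rw [Set.indicator_of_mem hm, Set.indicator_of_mem hm]
      have hb : steinAl μ σ2 κ (l-1) * π (l-1) = steinBe μ σ2 κ l * π l := by
        have := hbal (l-1)
        rwa [show l - 1 + 1 = l from by omega] at this
      calc steinBe μ σ2 κ k * π l
          ≤ steinBe μ σ2 κ l * π l :=
            mul_le_mul_of_nonneg_right (steinBe_mono hκ1 (by omega)) (hpos l).le
        _ = steinAl μ σ2 κ (l-1) * π (l-1) := hb.symm
        _ ≤ steinAl μ σ2 κ k * π (l-1) :=
            mul_le_mul_of_nonneg_right (steinAl_anti hκ2 (by omega)) (hpos _).le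
    · have hm : l ∉ Set.Ici (k+1) := h
      rw [Set.indicator_of_notMem hm, Set.indicator_of_notMem hm]
  have sumL : Summable ((Set.Ici (k+1)).indicator (fun l => steinBe μ σ2 κ k * π l)) :=
    (hsum.summable.mul_left _).indicator _
  have sumR : Summable ((Set.Ici (k+1)).indicator (fun l => steinAl μ σ2 κ k * π (l - 1))) :=
    ((stein_shift_summable' hsum).mul_left _).indicator _
  have step3 : ∑' l, (Set.Ici (k+1)).indicator (fun l => steinAl μ σ2 κ k * π (l - 1)) l
      = steinAl μ σ2 κ k * steinG π k := by
    have hpt : ∀ l, (Set.Ici (k+1)).indicator (fun l => steinAl μ σ2 κ k * π (l - 1)) l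
        = steinAl μ σ2 κ k * (Set.Ici k).indicator π (l - 1) := by
      intro l
      by_cases h : k + 1 ≤ l
      · have h2 : k ≤ l - 1 := by omega
        simp [Set.indicator_apply, h, h2]
      · have h2 : ¬ (k ≤ l - 1) := by omega
        simp [Set.indicator_apply, h, h2]
    rw [tsum_congr hpt, tsum_mul_left]
    congr 1
    exact (Equiv.subRight (1:ℤ)).tsum_eq ((Set.Ici k).indicator π)
  calc steinBe μ σ2 κ k * steinG π (k + 1)
      = _ := step1
    _ ≤ _ := Summable.tsum_le_tsum step2 sumL sumR
    _ = steinAl μ σ2 κ k * steinG π k := step3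

end SteinClaims

noncomputable section SteinKey

def steinU (μ σ2 : ℝ) (κ : ℤ) (π : ℤ → ℝ) (k j : ℤ) : ℝ :=
  π j * (if k ≤ j then -(steinF π (k-1)) / (steinBe μ σ2 κ k * π k)
         else steinG π k / (steinBe μ σ2 κ k * π k))

def steinf (μ σ2 : ℝ) (κ : ℤ) (π : ℤ → ℝ) (j i : ℤ) : ℝ :=
  if i ≤ j then
    -(π j) * (∑' l : {l : ℤ // l ≤ i - 1}, π ↑l) / (steinAl μ σ2 κ (i - 1) * π (i - 1))
  else
    π j * (∑' l : {l : ℤ // i ≤ l}, π ↑l) / (steinBe μ σ2 κ i * π i)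

lemma stein_key (μ σ2 : ℝ) (hσ : 0 < σ2) (κ : ℤ)
    (hκ1 : μ ≤ (κ : ℝ)) (hκ2 : (κ : ℝ) < μ + 1)
    (π : ℤ → ℝ) (hpos : ∀ i, 0 < π i) (hsum : HasSum π 1)
    (hbal : ∀ i : ℤ, steinAl μ σ2 κ i * π i = steinBe μ σ2 κ (i+1) * π (i+1))
    (A : Set ℤ) (i : ℤ) :
    |(∑' j : A, steinf μ σ2 κ π ↑j (i+1)) - ∑' j : A, steinf μ σ2 κ π ↑j i|
      ≤ min ((1 - π i) / (min (steinAl μ σ2 κ i) (steinBe μ σ2 κ i)))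
          (min (1 / steinAl μ σ2 κ i) (1 / steinBe μ σ2 κ i)) ∧
    min ((1 - π i) / (min (steinAl μ σ2 κ i) (steinBe μ σ2 κ i)))
        (min (1 / steinAl μ σ2 κ i) (1 / steinBe μ σ2 κ i))
      ≤ (1 - π i) / σ2 := by
  have hπ := hsum.summable
  have halpos : ∀ k, 0 < steinAl μ σ2 κ k := fun k => lt_of_lt_of_le hσ (steinAl_ge hκ2 k)
  have hbepos : ∀ k, 0 < steinBe μ σ2 κ k := fun k => lt_of_lt_of_le hσ (steinBe_ge hκ1 k)
  have hbb : ∀ k, 0 < steinBe μ σ2 κ k * π k := fun k => mul_pos (hbepos k) (hpos k)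
  have hueq : ∀ k j, steinU μ σ2 κ π k j
      = (Set.Ici k).indicator π j * (-(steinF π (k-1)) / (steinBe μ σ2 κ k * π k))
        + (Set.Iic (k-1)).indicator π j * (steinG π k / (steinBe μ σ2 κ k * π k)) := by
    intro k j
    unfold steinU
    by_cases h : k ≤ j
    · have h2 : ¬ j ≤ k - 1 := by omega
      simp [Set.indicator_apply, h, h2]
    · have h2 : j ≤ k - 1 := by omega
      simp [Set.indicator_apply, h, h2]
  have husum : ∀ k, Summable (steinU μ σ2 κ π k) := fun k =>
    (((steinG_summable hsum k).mul_right _).add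
      ((steinF_summable hsum (k-1)).mul_right _)).congr (fun j => (hueq k j).symm)
  have hutsum : ∀ k, ∑' j, steinU μ σ2 κ π k j = 0 := by
    intro k
    rw [tsum_congr (hueq k),
      Summable.tsum_add ((steinG_summable hsum k).mul_right _) ((steinF_summable hsum (k-1)).mul_right _),
      tsum_mul_right, tsum_mul_right]
    show steinG π k * (-(steinF π (k-1)) / (steinBe μ σ2 κ k * π k))
        + steinF π (k-1) * (steinG π k / (steinBe μ σ2 κ k * π k)) = 0
    ring
  have hfu : ∀ j k, steinf μ σ2 κ π j k = steinU μ σ2 κ π k j := by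
    intro j k
    unfold steinf steinU
    have hba : steinAl μ σ2 κ (k-1) * π (k-1) = steinBe μ σ2 κ k * π k := by
      have h0 := hbal (k-1)
      rwa [show k - 1 + 1 = k from by omega] at h0
    split_ifs with h
    · rw [steinF_sub (k-1), hba]; ring
    · rw [steinG_sub k]; ring
  set M := steinG π (i+1) / steinAl μ σ2 κ i + steinF π (i-1) / steinBe μ σ2 κ i with hM
  have hMnn : 0 ≤ M :=
    add_nonneg (div_nonneg (steinG_nonneg hpos _) (halpos i).le)
      (div_nonneg (steinF_nonneg hpos _) (hbepos i).le)
  have hDle : ∀ j : ℤ,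
      steinU μ σ2 κ π (i+1) j - steinU μ σ2 κ π i j ≤ if j = i then M else 0 := by
    intro j
    unfold steinU
    rcases lt_trichotomy j i with h|h|h
    · have h1 : ¬ (i + 1 ≤ j) := by omega
      have h2 : ¬ (i ≤ j) := by omega
      have h3 : ¬ (j = i) := by omega
      rw [if_neg h1, if_neg h2, if_neg h3]
      have hle : steinG π (i+1) / (steinBe μ σ2 κ (i+1) * π (i+1))
          ≤ steinG π i / (steinBe μ σ2 κ i * π i) := by
        rw [div_le_div_iff₀ (hbb (i+1)) (hbb i), ← hbal i]
        nlinarith [stein_claim2 hκ1 hκ2 hpos hsum hbal i, (hpos i).le]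
      nlinarith [mul_le_mul_of_nonneg_left hle (hpos j).le]
    · subst h
      rw [if_neg (by omega : ¬ (j + 1 ≤ j)), if_pos (le_refl j), if_pos rfl]
      apply le_of_eq
      rw [hM, ← hbal j]
      have h1 := (hpos j).ne'
      have h2 := (halpos j).ne'
      have h3 := (hbepos j).ne'
      field_simp
      ring
    · have h1 : i + 1 ≤ j := by omega
      have h2 : i ≤ j := by omega
      have h3 : ¬ (j = i) := by omega
      rw [if_pos h1, if_pos h2, if_neg h3]
      have hle : -(steinF π (i+1-1)) / (steinBe μ σ2 κ (i+1) * π (i+1))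
          ≤ -(steinF π (i-1)) / (steinBe μ σ2 κ i * π i) := by
        rw [show i + 1 - 1 = i from by omega,
          div_le_div_iff₀ (hbb (i+1)) (hbb i), ← hbal i]
        nlinarith [stein_claim1 hκ1 hκ2 hpos hsum hbal i, (hpos i).le]
      nlinarith [mul_le_mul_of_nonneg_left hle (hpos j).le]
  have hDsum : Summable (fun j => steinU μ σ2 κ π (i+1) j - steinU μ σ2 κ π i j) :=
    (husum (i+1)).sub (husum i)
  have hDzero : ∑' j, (steinU μ σ2 κ π (i+1) j - steinU μ σ2 κ π i j) = 0 := by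
    rw [Summable.tsum_sub (husum (i+1)) (husum i), hutsum, hutsum]; ring
  have hgs : Summable (fun j : ℤ => if j = i then M else 0) :=
    summable_of_ne_finset_zero (s := {i}) (fun j hj => if_neg (by simpa using hj))
  have hupper : ∀ B : Set ℤ,
      (∑' j : B, (steinU μ σ2 κ π (i+1) ↑j - steinU μ σ2 κ π i ↑j)) ≤ M := by
    intro B
    have h1 : (∑' j : B, (steinU μ σ2 κ π (i+1) ↑j - steinU μ σ2 κ π i ↑j))
        ≤ ∑' j : B, (if (↑j : ℤ) = i then M else 0) :=
      Summable.tsum_le_tsum (fun j => hDle ↑j) (hDsum.subtype B) (hgs.subtype B)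
    have h2 : (∑' j : B, (if (↑j : ℤ) = i then M else 0))
        = ∑' j, B.indicator (fun j => if j = i then M else 0) j :=
      tsum_subtype B (fun j => if j = i then M else 0)
    have h3 : (∑' j, B.indicator (fun j => if j = i then M else 0) j)
        ≤ ∑' j, (if j = i then M else 0) :=
      Summable.tsum_le_tsum
        (fun j => Set.indicator_le_self'
          (fun j _ => by split_ifs with hji; exacts [hMnn, le_rfl]) j)
        (hgs.indicator B) hgs
    have h4 : (∑' j : ℤ, (if j = i then M else 0)) = M := tsum_ite_eq i (fun _ => M)
    linarith
  have hlower : -M ≤ (∑' j : A, (steinU μ σ2 κ π (i+1) ↑j - steinU μ σ2 κ π i ↑j)) := by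
    have hc := Summable.tsum_add_tsum_compl (s := A) (hDsum.subtype A) (hDsum.subtype Aᶜ)
    have h2 := hupper Aᶜ
    rw [hDzero] at hc
    linarith
  have hdiff : (∑' j : A, steinf μ σ2 κ π ↑j (i+1)) - (∑' j : A, steinf μ σ2 κ π ↑j i)
      = ∑' j : A, (steinU μ σ2 κ π (i+1) ↑j - steinU μ σ2 κ π i ↑j) := by
    rw [tsum_congr (fun j : A => hfu ↑j (i+1)), tsum_congr (fun j : A => hfu ↑j i)]
    exact (Summable.tsum_sub ((husum (i+1)).subtype A) ((husum i).subtype A)).symm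
  have habs : |(∑' j : A, steinf μ σ2 κ π ↑j (i+1)) - ∑' j : A, steinf μ σ2 κ π ↑j i| ≤ M := by
    rw [hdiff]
    exact abs_le.mpr ⟨hlower, hupper A⟩
  have hone : steinF π (i-1) + π i + steinG π (i+1) = 1 := by
    have h1 := steinFG hsum i
    have h2 := steinG_step hsum i
    linarith
  have hMa : M ≤ 1 / steinAl μ σ2 κ i := by
    have h1 : steinF π (i-1) / steinBe μ σ2 κ i ≤ steinF π i / steinAl μ σ2 κ i := by
      rw [div_le_div_iff₀ (hbepos i) (halpos i)]
      nlinarith [stein_claim1 hκ1 hκ2 hpos hsum hbal i]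
    have h2 : steinG π (i+1) / steinAl μ σ2 κ i + steinF π i / steinAl μ σ2 κ i
        = 1 / steinAl μ σ2 κ i := by
      rw [← add_div]
      congr 1
      have := steinF_step hsum i
      linarith
    rw [hM]
    linarith
  have hMb : M ≤ 1 / steinBe μ σ2 κ i := by
    have h1 : steinG π (i+1) / steinAl μ σ2 κ i ≤ steinG π i / steinBe μ σ2 κ i := by
      rw [div_le_div_iff₀ (halpos i) (hbepos i)]
      nlinarith [stein_claim2 hκ1 hκ2 hpos hsum hbal i]
    have h2 : steinG π i / steinBe μ σ2 κ i + steinF π (i-1) / steinBe μ σ2 κ i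
        = 1 / steinBe μ σ2 κ i := by
      rw [← add_div]
      congr 1
      have := steinG_step hsum i
      linarith
    rw [hM]
    linarith
  have hmm : 0 < min (steinAl μ σ2 κ i) (steinBe μ σ2 κ i) := lt_min (halpos i) (hbepos i)
  have h1pi : 1 - π i = steinF π (i-1) + steinG π (i+1) := by linarith
  have hMm : M ≤ (1 - π i) / min (steinAl μ σ2 κ i) (steinBe μ σ2 κ i) := by
    have ha' : steinG π (i+1) / steinAl μ σ2 κ i
        ≤ steinG π (i+1) / min (steinAl μ σ2 κ i) (steinBe μ σ2 κ i) := by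
      rw [div_le_div_iff₀ (halpos i) hmm]
      exact mul_le_mul_of_nonneg_left (min_le_left _ _) (steinG_nonneg hpos _)
    have hb' : steinF π (i-1) / steinBe μ σ2 κ i
        ≤ steinF π (i-1) / min (steinAl μ σ2 κ i) (steinBe μ σ2 κ i) := by
      rw [div_le_div_iff₀ (hbepos i) hmm]
      exact mul_le_mul_of_nonneg_left (min_le_right _ _) (steinF_nonneg hpos _)
    rw [hM, h1pi, add_div]
    linarith
  have hfinal2 : min ((1 - π i) / min (steinAl μ σ2 κ i) (steinBe μ σ2 κ i))
      (min (1 / steinAl μ σ2 κ i) (1 / steinBe μ σ2 κ i)) ≤ (1 - π i) / σ2 := by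
    have h1 : (1 - π i) / min (steinAl μ σ2 κ i) (steinBe μ σ2 κ i) ≤ (1 - π i) / σ2 := by
      rw [div_le_div_iff₀ hmm hσ]
      have hσm : σ2 ≤ min (steinAl μ σ2 κ i) (steinBe μ σ2 κ i) :=
        le_min (steinAl_ge hκ2 i) (steinBe_ge hκ1 i)
      have h1pinn : 0 ≤ 1 - π i := by
        rw [h1pi]
        exact add_nonneg (steinF_nonneg hpos _) (steinG_nonneg hpos _)
      nlinarith
    exact le_trans (min_le_left _ _) h1
  exact ⟨le_trans habs (le_min hMm (le_min hMa hMb)), hfinal2⟩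

end SteinKey




/-- The Stein factor bound (Lemma 3.4): with `κ = ⌈μ⌉`, for every `A ⊆ ℤ` and every `i`,
`|Δf_A(i)| ≤ (1-πᵢ)/(αᵢ∧βᵢ) ∧ (1/αᵢ) ∧ (1/βᵢ) ≤ (1-πᵢ)/σ²`. -/
theorem stein_factor_bound
    (μ σ2 : ℝ) (hσ : 0 < σ2) (κ : ℤ)
    (hκ1 : μ ≤ (κ : ℝ)) (hκ2 : (κ : ℝ) < μ + 1)
    (π : ℤ → ℝ) (hpos : ∀ i, 0 < π i) (hsum : HasSum π 1)
    (hbal : ∀ i : ℤ, (if κ ≤ i then σ2 else σ2 + μ - (i : ℝ)) * π i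
      = (if κ ≤ i + 1 then σ2 + ((i : ℝ) + 1) - μ else σ2) * π (i + 1)) :
    ∀ A : Set ℤ,
      let α : ℤ → ℝ := fun i => if κ ≤ i then σ2 else σ2 + μ - (i : ℝ)
      let β : ℤ → ℝ := fun i => if κ ≤ i then σ2 + (i : ℝ) - μ else σ2
      let f : ℤ → ℤ → ℝ := fun j i =>
        if i ≤ j then
          -(π j) * (∑' l : {l : ℤ // l ≤ i - 1}, π l) / (α (i - 1) * π (i - 1))
        else
          π j * (∑' l : {l : ℤ // i ≤ l}, π l) / (β i * π i)
      let fA : ℤ → ℝ := fun i => ∑' j : A, f j i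
      ∀ i : ℤ,
        |fA (i + 1) - fA i|
          ≤ min ((1 - π i) / (min (α i) (β i))) (min (1 / α i) (1 / β i)) ∧
        min ((1 - π i) / (min (α i) (β i))) (min (1 / α i) (1 / β i))
          ≤ (1 - π i) / σ2 := by
  have hbal' : ∀ i : ℤ, steinAl μ σ2 κ i * π i = steinBe μ σ2 κ (i+1) * π (i+1) := by
    intro k
    have h := hbal k
    unfold steinAl steinBe
    push_cast
    push_cast at h
    exact h
  intro A α β f fA i
  exact ⟨(stein_key μ σ2 hσ κ hκ1 hκ2 π hpos hsum hbal' A i).1,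
    (stein_key μ σ2 hσ κ hκ1 hκ2 π hpos hsum hbal' A i).2⟩
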